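/- Monotonicity of information gain in the absolute log Bayes factor: Fix π₀ ∈ (0,1), let σ be the logistic function, and define π(u) = σ(logit(π₀) + u) and F(u) = D(π(u)‖π₀), where D is the Bernoulli KL divergence. Then F is differentiable with F'(u) = u·π(u)·(1−π(u)); consequently F is strictly decreasing on (−∞,0) and strictly increasing on (0,∞), with F(0) = 0. -/

import Mathlib

noncomputable def logit (p : ℝ) : ℝ := Real.log (p / (1 - p))
noncomputable def logistic (x : ℝ) : ℝ := 1 / (1 + Real.exp (-x))
noncomputable def bernKL (p q : ℝ) : ℝ :=
  p * Real.log (p / q) + (1 - p) * Real.log ((1 - p) / (1 - q))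

lemma logistic_pos (x : ℝ) : 0 < logistic x := by
  unfold logistic; positivity

lemma logistic_lt_one (x : ℝ) : logistic x < 1 := by
  unfold logistic
  rw [div_lt_one (by positivity)]
  linarith [Real.exp_pos (-x)]

lemma one_sub_logistic (x : ℝ) : 1 - logistic x = Real.exp (-x) / (1 + Real.exp (-x)) := by
  unfold logistic
  have : (0:ℝ) < 1 + Real.exp (-x) := by positivity
  field_simp
  ring

lemma hasDerivAt_logistic (x : ℝ) :
    HasDerivAt logistic (logistic x * (1 - logistic x)) x := by
  have he : (0:ℝ) < 1 + Real.exp (-x) := by positivity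
  have h1 : HasDerivAt (fun x : ℝ => 1 + Real.exp (-x)) (-Real.exp (-x)) x := by
    simpa using ((Real.hasDerivAt_exp (-x)).comp x ((hasDerivAt_id x).neg)).const_add 1
  have h2 := h1.inv (ne_of_gt he)
  have hfun : (fun y : ℝ => (1 + Real.exp (-y))⁻¹) = logistic := by
    funext y; simp [logistic, one_div]
  rw [show (fun x : ℝ => 1 + Real.exp (-x))⁻¹ = logistic from hfun] at h2
  refine h2.congr_deriv ?_
  rw [one_sub_logistic]
  unfold logistic
  field_simp

lemma log_logistic_ratio (x : ℝ) : Real.log (logistic x / (1 - logistic x)) = x := by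
  rw [one_sub_logistic]
  have he : (0:ℝ) < 1 + Real.exp (-x) := by positivity
  have h : logistic x / (Real.exp (-x) / (1 + Real.exp (-x))) = Real.exp x := by
    unfold logistic
    rw [Real.exp_neg]
    field_simp
  rw [h, Real.log_exp]

theorem stmt_7 (π₀ : ℝ) (h0 : 0 < π₀) (h1 : π₀ < 1) :
    let π : ℝ → ℝ := fun u => logistic (logit π₀ + u)
    let F : ℝ → ℝ := fun u => bernKL (π u) π₀
    (∀ u : ℝ, HasDerivAt F (u * π u * (1 - π u)) u) ∧
    StrictAntiOn F (Set.Iio (0 : ℝ)) ∧ StrictMonoOn F (Set.Ioi (0 : ℝ)) ∧ F 0 = 0 := by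
  intro π F
  have h1' : (0:ℝ) < 1 - π₀ := by linarith
  have hp : ∀ u, 0 < π u := fun u => logistic_pos _
  have hp1 : ∀ u, π u < 1 := fun u => logistic_lt_one _
  have hπder : ∀ u, HasDerivAt π (π u * (1 - π u)) u := by
    intro u
    have := (hasDerivAt_logistic (logit π₀ + u)).comp u
      ((hasDerivAt_id u).const_add (logit π₀))
    simpa [π, Function.comp_def] using this
  have hlog : ∀ u, Real.log (π u) - Real.log (1 - π u) = logit π₀ + u := by
    intro u
    rw [← Real.log_div (hp u).ne' (by linarith [hp1 u] : (1 - π u) ≠ 0)]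
    exact log_logistic_ratio _
  have hc : logit π₀ = Real.log π₀ - Real.log (1 - π₀) := by
    rw [logit, Real.log_div h0.ne' h1'.ne']
  have hFeq : F = fun u => π u * Real.log (π u) - π u * Real.log π₀ +
      ((1 - π u) * Real.log (1 - π u) - (1 - π u) * Real.log (1 - π₀)) := by
    funext u
    show bernKL (π u) π₀ = _
    rw [bernKL, Real.log_div (hp u).ne' h0.ne',
        Real.log_div (by linarith [hp1 u] : (1 - π u) ≠ 0) h1'.ne']
    ring
  have hder : ∀ u, HasDerivAt F (u * π u * (1 - π u)) u := by
    intro u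
    have hd := hπder u
    have hd1 : HasDerivAt (fun v => 1 - π v) (-(π u * (1 - π u))) u := hd.const_sub 1
    have hL1 : HasDerivAt (fun v => π v * Real.log (π v))
        (π u * (1 - π u) * Real.log (π u) + π u * ((π u * (1 - π u)) / π u)) u :=
      hd.mul (hd.log (hp u).ne')
    have hL2 : HasDerivAt (fun v => (1 - π v) * Real.log (1 - π v))
        (-(π u * (1 - π u)) * Real.log (1 - π u) +
          (1 - π u) * (-(π u * (1 - π u)) / (1 - π u))) u :=
      hd1.mul (hd1.log (by linarith [hp1 u] : (1 - π u) ≠ 0))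
    have hT : HasDerivAt F
        (π u * (1 - π u) * Real.log (π u) + π u * ((π u * (1 - π u)) / π u) -
          π u * (1 - π u) * Real.log π₀ +
          (-(π u * (1 - π u)) * Real.log (1 - π u) +
            (1 - π u) * (-(π u * (1 - π u)) / (1 - π u)) -
            -(π u * (1 - π u)) * Real.log (1 - π₀))) u := by
      rw [hFeq]
      exact (hL1.sub (hd.mul_const _)).add (hL2.sub (hd1.mul_const _))
    convert hT using 1
    have h2 := hlog u
    rw [hc] at h2
    have hne : π u ≠ 0 := (hp u).ne'
    have hne1 : (1 - π u) ≠ 0 := by linarith [hp1 u]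
    have e1 : π u * (π u * (1 - π u) / π u) = π u * (1 - π u) := by field_simp
    have e2 : (1 - π u) * (-(π u * (1 - π u)) / (1 - π u)) = -(π u * (1 - π u)) := by
      field_simp
    rw [e1, e2]
    linear_combination (-(π u * (1 - π u))) * h2
  have hFderiv : ∀ u, deriv F u = u * π u * (1 - π u) := fun u => (hder u).deriv
  have hcont : ContinuousOn F Set.univ := fun x _ =>
    (hder x).differentiableAt.continuousAt.continuousWithinAt
  refine ⟨hder, ?_, ?_, ?_⟩
  · apply StrictAntiOn.mono (s := Set.Iic (0:ℝ)) ?_ Set.Iio_subset_Iic_self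
    apply strictAntiOn_of_deriv_neg (convex_Iic 0)
      (fun x _ => (hder x).differentiableAt.continuousAt.continuousWithinAt)
    intro x hx
    rw [interior_Iic] at hx
    rw [hFderiv x]
    have := mul_pos (hp x) (by linarith [hp1 x] : 0 < 1 - π x)
    nlinarith [hx.out]
  · apply StrictMonoOn.mono (s := Set.Ici (0:ℝ)) ?_ Set.Ioi_subset_Ici_self
    apply strictMonoOn_of_deriv_pos (convex_Ici 0)
      (fun x _ => (hder x).differentiableAt.continuousAt.continuousWithinAt)
    intro x hx
    rw [interior_Ici] at hx
    rw [hFderiv x]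
    have := mul_pos (hp x) (by linarith [hp1 x] : 0 < 1 - π x)
    nlinarith [hx.out]
  · have hπ0 : π 0 = π₀ := by
      show logistic (logit π₀ + 0) = π₀
      rw [add_zero]
      have he : Real.exp (-(logit π₀)) = (1 - π₀) / π₀ := by
        rw [logit, Real.exp_neg, Real.exp_log (by positivity), inv_div]
      unfold logistic
      rw [he]
      field_simp
      ring
    show bernKL (π 0) π₀ = 0
    rw [hπ0, bernKL, div_self h0.ne', div_self h1'.ne', Real.log_one]
    ring
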